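/- Let P be a probability measure on ℝ with CDF F and primitive 𝐅 (vanishing at 0), and let τ ∈ (0,1). Then for every q ∈ ℝ, Φ(q) := ∫_ℝ (ρ_τ(x - q) - ρ_τ(x)) dP(x) equals 𝐅(q) - τ·q. -/

import Mathlib

open MeasureTheory

noncomputable def rho (τ : ℝ) (x : ℝ) : ℝ := if x ≤ 0 then (τ - 1) * x else τ * x

noncomputable def cdf' (P : Measure ℝ) (x : ℝ) : ℝ := (P (Set.Iic x)).toReal
noncomputable def primF (P : Measure ℝ) (x : ℝ) : ℝ := ∫ u in (0:ℝ)..x, cdf' P u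

lemma key (P : Measure ℝ) [IsProbabilityMeasure P] (a b : ℝ) (hab : a ≤ b) :
    ∫ x, (max (b - x) 0 - max (a - x) 0) ∂P
      = ∫ u in Set.Ioc a b, cdf' P u := by
  set ν : Measure ℝ := volume.restrict (Set.Ioc a b) with hν
  have hνfin : IsFiniteMeasure ν := by
    constructor
    rw [hν, Measure.restrict_apply_univ, Real.volume_Ioc]
    exact ENNReal.ofReal_lt_top
  have hs : MeasurableSet {p : ℝ × ℝ | p.1 ≤ p.2} :=
    measurableSet_le measurable_fst measurable_snd
  have hint : Integrable (Function.uncurry fun x u => if x ≤ u then (1:ℝ) else 0)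
      (P.prod ν) := by
    have h := (integrable_const (1:ℝ) (μ := P.prod ν)).indicator hs
    have heq : (Set.indicator {p : ℝ × ℝ | p.1 ≤ p.2} fun _ => (1:ℝ)) =
        Function.uncurry fun x u => if x ≤ u then (1:ℝ) else 0 := by
      ext p
      simp [Set.indicator_apply, Function.uncurry]
    rwa [heq] at h
  have hswap := integral_integral_swap (f := fun x u => if x ≤ u then (1:ℝ) else 0) hint
  have hinner1 : ∀ x : ℝ, (∫ u, (if x ≤ u then (1:ℝ) else 0) ∂ν)
      = max (b - x) 0 - max (a - x) 0 := by
    intro x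
    have : (fun u => if x ≤ u then (1:ℝ) else 0) =
        Set.indicator (Set.Ici x) (fun _ => (1:ℝ)) := by
      ext u; simp [Set.indicator_apply, Set.mem_Ici]
    rw [this, integral_indicator measurableSet_Ici, hν,
      Measure.restrict_restrict measurableSet_Ici, setIntegral_const, smul_eq_mul, mul_one]
    rcases le_or_gt x a with hxa | hxa
    · have hsub : Set.Ioc a b ⊆ Set.Ici x := fun u hu => le_trans hxa (le_of_lt hu.1)
      rw [Set.inter_eq_self_of_subset_right hsub, Measure.real, Real.volume_Ioc,
        ENNReal.toReal_ofReal (by linarith)]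
      rw [max_eq_left (by linarith), max_eq_left (by linarith)]
      ring
    · have hset : Set.Ici x ∩ Set.Ioc a b = Set.Icc x b := by
        ext u
        constructor
        · rintro ⟨h1, _, h3⟩; exact ⟨h1, h3⟩
        · rintro ⟨h1, h2⟩; exact ⟨h1, lt_of_lt_of_le hxa h1, h2⟩
      rw [hset, Measure.real, Real.volume_Icc, ENNReal.toReal_ofReal',
        show max (a - x) 0 = 0 from max_eq_right (by linarith), sub_zero]
  have hinner2 : ∀ u : ℝ, (∫ x, (if x ≤ u then (1:ℝ) else 0) ∂P) = cdf' P u := by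
    intro u
    have : (fun x => if x ≤ u then (1:ℝ) else 0) =
        Set.indicator (Set.Iic u) (fun _ => (1:ℝ)) := by
      ext x; simp [Set.indicator_apply, Set.mem_Iic]
    rw [this, integral_indicator measurableSet_Iic, setIntegral_const, smul_eq_mul, mul_one,
      cdf', Measure.real]
  calc ∫ x, (max (b - x) 0 - max (a - x) 0) ∂P
      = ∫ x, (∫ u, (if x ≤ u then (1:ℝ) else 0) ∂ν) ∂P := by
        exact integral_congr_ae (Filter.Eventually.of_forall fun x => (hinner1 x).symm)
    _ = ∫ u, (∫ x, (if x ≤ u then (1:ℝ) else 0) ∂P) ∂ν := hswap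
    _ = ∫ u, cdf' P u ∂ν := by
        exact integral_congr_ae (Filter.Eventually.of_forall fun u => hinner2 u)

theorem stmt9 (P : Measure ℝ) [IsProbabilityMeasure P] (τ : ℝ) (hτ : τ ∈ Set.Ioo (0:ℝ) 1)
    (q : ℝ) :
    ∫ x, (rho τ (x - q) - rho τ x) ∂P = primF P q - τ * q := by
  have hg : ∀ x : ℝ, rho τ (x - q) - rho τ x
      = (max (q - x) 0 - max (0 - x) 0) - τ * q := by
    intro x
    unfold rho
    split_ifs with h1 h2 h2
    · rw [max_eq_left (by linarith), max_eq_left (by linarith)]; ring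
    · rw [max_eq_left (by linarith), max_eq_right (by linarith)]; ring
    · rw [max_eq_right (by linarith), max_eq_left (by linarith)]; ring
    · rw [max_eq_right (by linarith), max_eq_right (by linarith)]; ring
  have hcont : Continuous fun x : ℝ => max (q - x) 0 - max (0 - x) 0 := by
    continuity
  have hbdd : ∀ x : ℝ, ‖max (q - x) 0 - max (0 - x) 0‖ ≤ |q| := by
    intro x
    have h := abs_max_sub_max_le_max (q - x) 0 (0 - x) 0
    simp only [sub_sub_sub_cancel_right, sub_zero, abs_zero] at h
    calc ‖max (q - x) 0 - max (0 - x) 0‖ ≤ max |q| 0 := by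
          simpa using h
      _ = |q| := max_eq_left (abs_nonneg q)
  have hgint : Integrable (fun x : ℝ => max (q - x) 0 - max (0 - x) 0) P :=
    Integrable.mono' (integrable_const |q|) hcont.aestronglyMeasurable
      (Filter.Eventually.of_forall hbdd)
  have hstep : ∫ x, (rho τ (x - q) - rho τ x) ∂P
      = (∫ x, (max (q - x) 0 - max (0 - x) 0) ∂P) - τ * q := by
    calc ∫ x, (rho τ (x - q) - rho τ x) ∂P
        = ∫ x, ((max (q - x) 0 - max (0 - x) 0) - τ * q) ∂P := by
          exact integral_congr_ae (Filter.Eventually.of_forall fun x => hg x)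
      _ = (∫ x, (max (q - x) 0 - max (0 - x) 0) ∂P) - ∫ _x, τ * q ∂P :=
          integral_sub hgint (integrable_const _)
      _ = (∫ x, (max (q - x) 0 - max (0 - x) 0) ∂P) - τ * q := by
          simp
  rw [hstep]
  congr 1
  rcases le_or_gt 0 q with hq | hq
  · rw [key P 0 q hq, primF, intervalIntegral.integral_of_le hq]
  · have h1 : ∫ x, (max (q - x) 0 - max (0 - x) 0) ∂P
        = - ∫ x, (max (0 - x) 0 - max (q - x) 0) ∂P := by
      rw [← integral_neg]
      exact integral_congr_ae (Filter.Eventually.of_forall fun x => by ring)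
    rw [h1, key P q 0 hq.le, primF, intervalIntegral.integral_symm,
      intervalIntegral.integral_of_le hq.le]
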